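/- Let KT be a Kragujevac tree with n vertices whose d branches are γ_i ≅ R_{k_i} for i = 1,…,d. Then A_p(KT)^p = (n − d − 1)/2 + ∑_{i=1}^{d} (k_i·(k_i − 1)^p + |k_i − d + 1|^p). -/

import Mathlib

open Finset

/-- The general Albertson irregularity index. -/
noncomputable def Ap {V : Type*} [Fintype V] (G : SimpleGraph V) [DecidableRel G.Adj]
    (p : ℝ) : ℝ :=
  ((∑ u : V, ∑ v ∈ G.neighborFinset u,
      |(G.degree u : ℝ) - (G.degree v : ℝ)| ^ p) / 2) ^ (1 / p)

/-- Vertices of the Kragujevac tree with `d` branches `R_{k 0}, …, R_{k (d-1)}`: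
a central vertex, the `d` branch roots, and, for the `j`-th copy of `P₃` in branch `i`,
a middle vertex `⟨i, j⟩` and a leaf `⟨i, j⟩`. -/
abbrev KTVert (d : ℕ) (k : Fin d → ℕ) : Type :=
  Unit ⊕ Fin d ⊕ (Σ i : Fin d, Fin (k i)) ⊕ (Σ i : Fin d, Fin (k i))

/-- Adjacency of the Kragujevac tree: the central vertex is adjacent to every branch root,
the root of branch `i` is adjacent to the `k i` middle vertices of its `P₃`'s, and each
middle vertex is adjacent to the corresponding leaf. -/
def KTAdj (d : ℕ) (k : Fin d → ℕ) (x y : KTVert d k) : Prop :=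
  (∃ i, x = Sum.inl () ∧ y = Sum.inr (Sum.inl i)) ∨
  (∃ i, y = Sum.inl () ∧ x = Sum.inr (Sum.inl i)) ∨
  (∃ z : Σ i : Fin d, Fin (k i), x = Sum.inr (Sum.inl z.1) ∧ y = Sum.inr (Sum.inr (Sum.inl z))) ∨
  (∃ z : Σ i : Fin d, Fin (k i), y = Sum.inr (Sum.inl z.1) ∧ x = Sum.inr (Sum.inr (Sum.inl z))) ∨
  (∃ z : Σ i : Fin d, Fin (k i), x = Sum.inr (Sum.inr (Sum.inl z)) ∧ y = Sum.inr (Sum.inr (Sum.inr z))) ∨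
  (∃ z : Σ i : Fin d, Fin (k i), y = Sum.inr (Sum.inr (Sum.inl z)) ∧ x = Sum.inr (Sum.inr (Sum.inr z)))

/-- The Kragujevac tree with central vertex of degree `d` and branches `R_{k i}`. -/
def KT (d : ℕ) (k : Fin d → ℕ) : SimpleGraph (KTVert d k) where
  Adj := KTAdj d k
  symm := by
    constructor
    rintro x y (⟨i, h1, h2⟩ | ⟨i, h1, h2⟩ | ⟨z, h1, h2⟩ | ⟨z, h1, h2⟩ | ⟨z, h1, h2⟩ | ⟨z, h1, h2⟩)
    · exact Or.inr (Or.inl ⟨i, h1, h2⟩)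
    · exact Or.inl ⟨i, h1, h2⟩
    · exact Or.inr (Or.inr (Or.inr (Or.inl ⟨z, h1, h2⟩)))
    · exact Or.inr (Or.inr (Or.inl ⟨z, h1, h2⟩))
    · exact Or.inr (Or.inr (Or.inr (Or.inr (Or.inr ⟨z, h1, h2⟩))))
    · exact Or.inr (Or.inr (Or.inr (Or.inr (Or.inl ⟨z, h1, h2⟩))))
  loopless := by
    constructor
    rintro x (⟨i, h1, h2⟩ | ⟨i, h1, h2⟩ | ⟨z, h1, h2⟩ | ⟨z, h1, h2⟩ | ⟨z, h1, h2⟩ | ⟨z, h1, h2⟩) <;>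
      subst h1 <;> simp_all

instance KTAdjDecidable (d : ℕ) (k : Fin d → ℕ) : DecidableRel (KTAdj d k) := fun x y => by
  unfold KTAdj
  exact @instDecidableOr _ _ inferInstance (@instDecidableOr _ _ inferInstance
    (@instDecidableOr _ _ inferInstance (@instDecidableOr _ _ inferInstance
      (@instDecidableOr _ _ inferInstance inferInstance))))

instance KTAdjDecidable' (d : ℕ) (k : Fin d → ℕ) : DecidableRel (KT d k).Adj :=
  inferInstanceAs (DecidableRel (KTAdj d k))


section Aux
variable {d : ℕ} {k : Fin d → ℕ}

lemma KT_adj_iff (x y : KTVert d k) : (KT d k).Adj x y ↔ KTAdj d k x y := Iff.rfl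

@[simp] lemma adj_cc (u v : Unit) : (KT d k).Adj (Sum.inl u) (Sum.inl v) ↔ False := by
  simp [KT_adj_iff, KTAdj]
@[simp] lemma adj_cr (u : Unit) (i : Fin d) :
    (KT d k).Adj (Sum.inl u) (Sum.inr (Sum.inl i)) ↔ True := by
  simp [KT_adj_iff, KTAdj]
@[simp] lemma adj_cm (u : Unit) (z : Σ i : Fin d, Fin (k i)) :
    (KT d k).Adj (Sum.inl u) (Sum.inr (Sum.inr (Sum.inl z))) ↔ False := by
  simp [KT_adj_iff, KTAdj]
@[simp] lemma adj_cl (u : Unit) (z : Σ i : Fin d, Fin (k i)) :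
    (KT d k).Adj (Sum.inl u) (Sum.inr (Sum.inr (Sum.inr z))) ↔ False := by
  simp [KT_adj_iff, KTAdj]
@[simp] lemma adj_rc (i : Fin d) (u : Unit) :
    (KT d k).Adj (Sum.inr (Sum.inl i)) (Sum.inl u) ↔ True := by
  simp [KT_adj_iff, KTAdj]
@[simp] lemma adj_rr (i j : Fin d) :
    (KT d k).Adj (Sum.inr (Sum.inl i)) (Sum.inr (Sum.inl j)) ↔ False := by
  simp [KT_adj_iff, KTAdj]
@[simp] lemma adj_rm (i : Fin d) (z : Σ i : Fin d, Fin (k i)) :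
    (KT d k).Adj (Sum.inr (Sum.inl i)) (Sum.inr (Sum.inr (Sum.inl z))) ↔ z.1 = i := by
  constructor
  · rintro (⟨_, h, _⟩ | ⟨_, _, h⟩ | ⟨w, h1, h2⟩ | ⟨w, _, h⟩ | ⟨w, h, _⟩ | ⟨w, _, h⟩) <;>
      simp_all
  · intro h
    exact Or.inr (Or.inr (Or.inl ⟨z, by rw [h], rfl⟩))
@[simp] lemma adj_rl (i : Fin d) (z : Σ i : Fin d, Fin (k i)) :
    (KT d k).Adj (Sum.inr (Sum.inl i)) (Sum.inr (Sum.inr (Sum.inr z))) ↔ False := by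
  simp [KT_adj_iff, KTAdj]
@[simp] lemma adj_mc (z : Σ i : Fin d, Fin (k i)) (u : Unit) :
    (KT d k).Adj (Sum.inr (Sum.inr (Sum.inl z))) (Sum.inl u) ↔ False := by
  simp [KT_adj_iff, KTAdj]
@[simp] lemma adj_mr (z : Σ i : Fin d, Fin (k i)) (i : Fin d) :
    (KT d k).Adj (Sum.inr (Sum.inr (Sum.inl z))) (Sum.inr (Sum.inl i)) ↔ z.1 = i := by
  rw [(KT d k).adj_comm, adj_rm]
@[simp] lemma adj_mm (z w : Σ i : Fin d, Fin (k i)) :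
    (KT d k).Adj (Sum.inr (Sum.inr (Sum.inl z))) (Sum.inr (Sum.inr (Sum.inl w))) ↔ False := by
  simp [KT_adj_iff, KTAdj]
@[simp] lemma adj_ml (z w : Σ i : Fin d, Fin (k i)) :
    (KT d k).Adj (Sum.inr (Sum.inr (Sum.inl z))) (Sum.inr (Sum.inr (Sum.inr w))) ↔ w = z := by
  constructor
  · rintro (⟨_, h, _⟩ | ⟨_, _, h⟩ | ⟨w', h, _⟩ | ⟨w', _, h⟩ | ⟨w', h1, h2⟩ | ⟨w', h1, h2⟩) <;>
      simp_all
  · rintro rfl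
    exact Or.inr (Or.inr (Or.inr (Or.inr (Or.inl ⟨w, rfl, rfl⟩))))
@[simp] lemma adj_lc (z : Σ i : Fin d, Fin (k i)) (u : Unit) :
    (KT d k).Adj (Sum.inr (Sum.inr (Sum.inr z))) (Sum.inl u) ↔ False := by
  simp [KT_adj_iff, KTAdj]
@[simp] lemma adj_lr (z : Σ i : Fin d, Fin (k i)) (i : Fin d) :
    (KT d k).Adj (Sum.inr (Sum.inr (Sum.inr z))) (Sum.inr (Sum.inl i)) ↔ False := by
  simp [KT_adj_iff, KTAdj]
@[simp] lemma adj_lm (z w : Σ i : Fin d, Fin (k i)) :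
    (KT d k).Adj (Sum.inr (Sum.inr (Sum.inr z))) (Sum.inr (Sum.inr (Sum.inl w))) ↔ z = w := by
  rw [(KT d k).adj_comm, adj_ml]
@[simp] lemma adj_ll (z w : Σ i : Fin d, Fin (k i)) :
    (KT d k).Adj (Sum.inr (Sum.inr (Sum.inr z))) (Sum.inr (Sum.inr (Sum.inr w))) ↔ False := by
  simp [KT_adj_iff, KTAdj]

lemma sum_KTVert {M : Type*} [AddCommMonoid M] (f : KTVert d k → M) :
    ∑ x, f x = f (Sum.inl ()) + ((∑ i, f (Sum.inr (Sum.inl i))) +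
      ((∑ z, f (Sum.inr (Sum.inr (Sum.inl z)))) + ∑ z, f (Sum.inr (Sum.inr (Sum.inr z))))) := by
  simp [Fintype.sum_sum_type]

lemma sum_sigma_fst_eq {M : Type*} [AddCommMonoid M] (i : Fin d) (c : M) :
    ∑ z : Σ i : Fin d, Fin (k i), (if z.1 = i then c else 0) = k i • c := by
  rw [← Finset.univ_sigma_univ, Finset.sum_sigma]
  have h : ∀ x : Fin d, (∑ _j : Fin (k x), if x = i then c else 0)
      = if x = i then (k x) • c else 0 := by
    intro x; split <;> simp
  rw [Finset.sum_congr rfl fun x _ => h x, Finset.sum_ite_eq' Finset.univ i fun x => (k x) • c]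
  simp

lemma KT_degree_eq_sum (u : KTVert d k) :
    (KT d k).degree u = ∑ v, if (KT d k).Adj u v then 1 else 0 := by
  rw [← SimpleGraph.card_neighborFinset_eq_degree, SimpleGraph.neighborFinset_eq_filter,
    Finset.card_filter]

lemma deg_center : (KT d k).degree (Sum.inl (() : Unit) : KTVert d k) = d := by
  rw [KT_degree_eq_sum, sum_KTVert]
  simp

lemma deg_root (i : Fin d) : (KT d k).degree (Sum.inr (Sum.inl i)) = k i + 1 := by
  rw [KT_degree_eq_sum, sum_KTVert]
  simp only [adj_rc, adj_rr, adj_rm, adj_rl, iff_true, iff_false, if_true, if_false,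
    Finset.sum_const_zero, add_zero, zero_add, sum_sigma_fst_eq, smul_eq_mul, mul_one]
  omega

lemma deg_mid (z : Σ i : Fin d, Fin (k i)) :
    (KT d k).degree (Sum.inr (Sum.inr (Sum.inl z))) = 2 := by
  rw [KT_degree_eq_sum, sum_KTVert]
  simp only [adj_mc, adj_mr, adj_mm, adj_ml, iff_false, if_false,
    Finset.sum_const_zero, add_zero, zero_add, Finset.sum_ite_eq, Finset.sum_ite_eq',
    Finset.mem_univ, if_true]

lemma deg_leaf (z : Σ i : Fin d, Fin (k i)) :
    (KT d k).degree (Sum.inr (Sum.inr (Sum.inr z))) = 1 := by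
  rw [KT_degree_eq_sum, sum_KTVert]
  simp only [adj_lc, adj_lr, adj_lm, adj_ll, iff_false, if_false,
    Finset.sum_const_zero, add_zero, zero_add, Finset.sum_ite_eq, Finset.sum_ite_eq',
    Finset.mem_univ, if_true]

end Aux

section Aux2
variable {d : ℕ} {k : Fin d → ℕ}

lemma sum_sigma_fun {M : Type*} [AddCommMonoid M] (g : Fin d → M) :
    ∑ z : Σ i : Fin d, Fin (k i), g z.1 = ∑ i, (k i) • g i := by
  rw [← Finset.univ_sigma_univ, Finset.sum_sigma]
  simp

end Aux2

theorem stmt19 (d : ℕ) (hd : 2 ≤ d) (k : Fin d → ℕ) (hk : ∀ i, 2 ≤ k i)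
    (p : ℝ) (hp : 0 < p) :
    Ap (KT d k) p ^ p =
      ((Fintype.card (KTVert d k) : ℝ) - d - 1) / 2 +
        ∑ i : Fin d, ((k i : ℝ) * ((k i : ℝ) - 1) ^ p + |(k i : ℝ) - (d : ℝ) + 1| ^ p) := by
  have hk2 : ∀ i, (2 : ℝ) ≤ (k i : ℝ) := fun i => by exact_mod_cast hk i
  have key : (∑ u : KTVert d k, ∑ v ∈ (KT d k).neighborFinset u,
        |((KT d k).degree u : ℝ) - ((KT d k).degree v : ℝ)| ^ p)
      = 2 * ∑ i, ((k i : ℝ) + (k i : ℝ) * ((k i : ℝ) - 1) ^ p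
          + |(k i : ℝ) - (d : ℝ) + 1| ^ p) := by
    have hrw : ∀ u : KTVert d k, (∑ v ∈ (KT d k).neighborFinset u,
          |((KT d k).degree u : ℝ) - ((KT d k).degree v : ℝ)| ^ p)
        = ∑ v, if (KT d k).Adj u v then
            |((KT d k).degree u : ℝ) - ((KT d k).degree v : ℝ)| ^ p else 0 := fun u => by
      rw [SimpleGraph.neighborFinset_eq_filter, Finset.sum_filter]
    simp only [hrw]
    rw [sum_KTVert]
    simp only [sum_KTVert]
    simp only [adj_cc, adj_cr, adj_cm, adj_cl, adj_rc, adj_rr, adj_rm, adj_rl,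
      adj_mc, adj_mr, adj_mm, adj_ml, adj_lc, adj_lr, adj_lm, adj_ll,
      iff_true, iff_false, if_true, if_false, ite_true, ite_false,
      deg_center, deg_root, deg_mid, deg_leaf,
      Finset.sum_const_zero, add_zero, zero_add,
      Finset.sum_ite_eq, Finset.sum_ite_eq', Finset.mem_univ,
      sum_sigma_fst_eq, Finset.sum_const, Finset.card_univ]
    rw [sum_sigma_fun (fun i => |((2:ℕ):ℝ) - ((k i + 1 : ℕ) : ℝ)| ^ p + |((2:ℕ):ℝ) - ((1:ℕ):ℝ)| ^ p)]
    rw [show Fintype.card ((i : Fin d) × Fin (k i)) = ∑ i, k i by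
      simp [Fintype.card_sigma], Finset.sum_smul, Finset.mul_sum,
      ← Finset.sum_add_distrib, ← Finset.sum_add_distrib, ← Finset.sum_add_distrib]
    refine Finset.sum_congr rfl fun i _ => ?_
    have h2 : (1:ℝ) ≤ (k i : ℝ) := le_trans one_le_two (hk2 i)
    have e1 : ((d:ℝ)) - ((k i + 1 : ℕ):ℝ) = -(((k i : ℝ)) - d + 1) := by push_cast; ring
    have e2 : ((k i + 1 : ℕ):ℝ) - (d:ℝ) = ((k i : ℝ)) - d + 1 := by push_cast; ring
    have e3 : |((k i + 1 : ℕ):ℝ) - ((2:ℕ):ℝ)| = (k i : ℝ) - 1 := by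
      rw [show ((k i + 1 : ℕ):ℝ) - ((2:ℕ):ℝ) = (k i : ℝ) - 1 by push_cast; ring]
      exact abs_of_nonneg (by linarith)
    have e4 : |((2:ℕ):ℝ) - ((k i + 1 : ℕ):ℝ)| = (k i : ℝ) - 1 := by
      rw [show ((2:ℕ):ℝ) - ((k i + 1 : ℕ):ℝ) = -((k i : ℝ) - 1) by push_cast; ring, abs_neg]
      exact abs_of_nonneg (by linarith)
    have e5 : |((2:ℕ):ℝ) - ((1:ℕ):ℝ)| = 1 := by norm_num
    have e6 : |((1:ℕ):ℝ) - ((2:ℕ):ℝ)| = 1 := by norm_num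
    rw [e1, abs_neg, e2, e3, e4, e5, e6, Real.one_rpow, nsmul_eq_mul, nsmul_eq_mul]
    ring
  have hcard : (Fintype.card (KTVert d k) : ℝ) = 1 + d + 2 * ∑ i, (k i : ℝ) := by
    simp only [KTVert, Fintype.card_sum, Fintype.card_sigma, Fintype.card_fin,
      Fintype.card_unique]
    push_cast
    ring
  have hT : (0:ℝ) ≤ ∑ i, ((k i : ℝ) + (k i : ℝ) * ((k i : ℝ) - 1) ^ p
      + |(k i : ℝ) - (d : ℝ) + 1| ^ p) := by
    refine Finset.sum_nonneg fun i _ => ?_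
    have h2 := hk2 i
    have : (0:ℝ) ≤ ((k i : ℝ) - 1) ^ p := Real.rpow_nonneg (by linarith) p
    have : (0:ℝ) ≤ |(k i : ℝ) - (d : ℝ) + 1| ^ p := Real.rpow_nonneg (abs_nonneg _) p
    positivity
  rw [Ap, key, show (2 * ∑ i, ((k i : ℝ) + (k i : ℝ) * ((k i : ℝ) - 1) ^ p
      + |(k i : ℝ) - (d : ℝ) + 1| ^ p)) / 2
      = ∑ i, ((k i : ℝ) + (k i : ℝ) * ((k i : ℝ) - 1) ^ p
      + |(k i : ℝ) - (d : ℝ) + 1| ^ p) by ring,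
    one_div, Real.rpow_inv_rpow hT hp.ne', hcard, Finset.sum_add_distrib,
    Finset.sum_add_distrib, Finset.sum_add_distrib]
  ring
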